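/- Let Θ = (α,β,γ) ∈ Sₙ³ and let P be a partial Latin square of order n with Θ as an autotopism. Let B be the block of P consisting of the triples (r,c,s) ∈ O(P) with r in a fixed i-cycle of α and c in a fixed j-cycle of β. Then the size |B| is a multiple of lcm(i,j), and |B| = ω·lcm(i,j) for some ω with 0 ≤ ω ≤ gcd(i,j). -/

import Mathlib

open scoped Classical

/-- An isotopism of order `n`: a triple of permutations of `Fin n`. -/
abbrev Iso (n : ℕ) := Equiv.Perm (Fin n) × Equiv.Perm (Fin n) × Equiv.Perm (Fin n)

/-- `O` is (the orthogonal representation of) a partial Latin square: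
any two triples agreeing in two coordinates are equal. -/
def IsPLS {n : ℕ} (O : Finset (Fin n × Fin n × Fin n)) : Prop :=
  ∀ t₁ ∈ O, ∀ t₂ ∈ O,
    ((t₁.1 = t₂.1 ∧ t₁.2.1 = t₂.2.1) → t₁ = t₂) ∧
    ((t₁.1 = t₂.1 ∧ t₁.2.2 = t₂.2.2) → t₁ = t₂) ∧
    ((t₁.2.1 = t₂.2.1 ∧ t₁.2.2 = t₂.2.2) → t₁ = t₂)

/-- The action of an isotopism on a set of triples. -/
def applyIso {n : ℕ} (Θ : Iso n) (O : Finset (Fin n × Fin n × Fin n)) :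
    Finset (Fin n × Fin n × Fin n) :=
  O.image fun t => (Θ.1 t.1, Θ.2.1 t.2.1, Θ.2.2 t.2.2)

/-- `Θ` is an autotopism of `O`. -/
def IsAutotopism {n : ℕ} (Θ : Iso n) (O : Finset (Fin n × Fin n × Fin n)) : Prop :=
  applyIso Θ O = O

/-- `Θ` is an autotopism of some non-empty partial Latin square of order `n`. -/
def IsAutPLS {n : ℕ} (Θ : Iso n) : Prop :=
  ∃ O : Finset (Fin n × Fin n × Fin n), O.Nonempty ∧ IsPLS O ∧ IsAutotopism Θ O

/-- `O` is (the orthogonal representation of) a Latin square of order `n`. -/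
def IsLS {n : ℕ} (O : Finset (Fin n × Fin n × Fin n)) : Prop :=
  IsPLS O ∧ O.card = n * n

/-- The number of `i`-cycles of a permutation (fixed points count as 1-cycles). -/
def numCycles {n : ℕ} (π : Equiv.Perm (Fin n)) (i : ℕ) : ℕ :=
  if i = 1 then (Finset.univ.filter fun x => π x = x).card
  else Multiset.count i π.cycleType

/-- `π` has a cycle of length `i` in its disjoint cycle decomposition. -/
def HasCycle {n : ℕ} (π : Equiv.Perm (Fin n)) (i : ℕ) : Prop :=
  0 < numCycles π i

/-- The lcm condition on a triple of cycle lengths. -/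
def Admissible (i j k : ℕ) : Prop :=
  Nat.lcm i j = Nat.lcm i k ∧ Nat.lcm i j = Nat.lcm j k ∧
    Nat.lcm i j = Nat.lcm i (Nat.lcm j k)

/-- Componentwise composition of isotopisms. -/
def compIso {n : ℕ} (Θ Θ' : Iso n) : Iso n :=
  (Θ.1 * Θ'.1, Θ.2.1 * Θ'.2.1, Θ.2.2 * Θ'.2.2)

/-- Componentwise inverse of an isotopism. -/
def invIso {n : ℕ} (Θ : Iso n) : Iso n := (Θ.1⁻¹, Θ.2.1⁻¹, Θ.2.2⁻¹)

/-- The set of elements of the cycle of `π` containing `a` (its orbit). -/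
def orbitFinset {n : ℕ} (π : Equiv.Perm (Fin n)) (a : Fin n) : Finset (Fin n) :=
  Finset.univ.filter fun x => π.SameCycle a x

/-- `P` is `Θ`-completable: `Θ` is an autotopism of the partial Latin square `P`
and `P` can be completed to a Latin square admitting `Θ` as an autotopism. -/
def ThetaCompletable {n : ℕ} (Θ : Iso n) (O : Finset (Fin n × Fin n × Fin n)) : Prop :=
  IsPLS O ∧ IsAutotopism Θ O ∧ ∃ L, IsLS L ∧ IsAutotopism Θ L ∧ O ⊆ L

/-- The set of filled cells (row, column) of a partial Latin square. -/
def filledCells {n : ℕ} (O : Finset (Fin n × Fin n × Fin n)) : Finset (Fin n × Fin n) :=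
  O.image fun t => (t.1, t.2.1)

/-- The partition function. -/
def pnat (k : ℕ) : ℕ := Fintype.card (Nat.Partition k)

section helpers
variable {γ : Type*} [Fintype γ] [DecidableEq γ]
set_option linter.unusedSectionVars false

/-- Orbit of a point under a permutation, as a finset. -/
def orbF (f : Equiv.Perm γ) (x : γ) : Finset γ :=
  Finset.univ.filter fun y => f.SameCycle x y

lemma mem_orbF {f : Equiv.Perm γ} {x y : γ} : y ∈ orbF f x ↔ f.SameCycle x y := by
  simp [orbF]

lemma orbF_eq_of_sameCycle {f : Equiv.Perm γ} {x y : γ} (h : f.SameCycle x y) :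
    orbF f x = orbF f y := by
  ext z; simp only [mem_orbF]
  exact ⟨fun hz => h.symm.trans hz, fun hz => h.trans hz⟩

lemma mem_periodicPts_perm (f : Equiv.Perm γ) (x : γ) :
    x ∈ Function.periodicPts ⇑f := by
  refine Function.mk_mem_periodicPts (orderOf_pos f) ?_
  show f^[orderOf f] x = x
  rw [← Equiv.Perm.coe_pow, pow_orderOf_eq_one]; rfl

lemma card_orbF (f : Equiv.Perm γ) (x : γ) :
    (orbF f x).card = Function.minimalPeriod ⇑f x := by
  have hm : 0 < Function.minimalPeriod ⇑f x :=
    Function.minimalPeriod_pos_of_mem_periodicPts (mem_periodicPts_perm f x)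
  have : orbF f x = (Finset.range (Function.minimalPeriod ⇑f x)).image
      (fun k => f^[k] x) := by
    ext y
    simp only [mem_orbF, Finset.mem_image, Finset.mem_range]
    constructor
    · intro h
      obtain ⟨i, hi, hiy⟩ := h.exists_pow_eq'
      refine ⟨i % Function.minimalPeriod ⇑f x, Nat.mod_lt _ hm, ?_⟩
      rw [Function.iterate_mod_minimalPeriod_eq, ← Equiv.Perm.coe_pow] at *
      exact hiy
    · rintro ⟨k, hk, rfl⟩
      exact ⟨(k : ℤ), by rw [zpow_natCast, ← Equiv.Perm.coe_pow]⟩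
  rw [this, Finset.card_image_of_injOn, Finset.card_range]
  intro m hm1 k hk1 h
  exact Function.iterate_injOn_Iio_minimalPeriod
    (by simpa using Finset.mem_range.1 hm1) (by simpa using Finset.mem_range.1 hk1) h

lemma orbF_subset_of_forward {f : Equiv.Perm γ} {C : Finset γ}
    (hC : ∀ x ∈ C, f x ∈ C) {x : γ} (hx : x ∈ C) : orbF f x ⊆ C := by
  have hpow : ∀ k : ℕ, (f ^ k) x ∈ C := by
    intro k
    induction k with
    | zero => simpa using hx
    | succ k ih =>
      rw [pow_succ']
      exact hC _ ih
  intro y hy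
  obtain ⟨i, _, rfl⟩ := (mem_orbF.1 hy).exists_pow_eq'
  exact hpow i

end helpers

lemma orbitFinset_eq_orbF {n : ℕ} (π : Equiv.Perm (Fin n)) (a : Fin n) :
    orbitFinset π a = orbF π a := rfl

/-- the size of a block of the `Θ`-decomposition of a partial Latin square
admitting `Θ = (α,β,γ)` as autotopism is `ω·lcm(i,j)` with `0 ≤ ω ≤ gcd(i,j)`, where `i`
and `j` are the lengths of the corresponding cycles of `α` and `β`. -/
theorem stmt6 (n : ℕ) (α β γ : Equiv.Perm (Fin n)) (O : Finset (Fin n × Fin n × Fin n))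
    (hpls : IsPLS O) (haut : IsAutotopism (α, β, γ) O) (a b : Fin n) :
    ∃ ω ≤ Nat.gcd (orbitFinset α a).card (orbitFinset β b).card,
      (O.filter fun t => t.1 ∈ orbitFinset α a ∧ t.2.1 ∈ orbitFinset β b).card =
        ω * Nat.lcm (orbitFinset α a).card (orbitFinset β b).card := by
  set i := (orbitFinset α a).card with hi
  set j := (orbitFinset β b).card with hj
  have hipos : 0 < i := Finset.card_pos.2 ⟨a, mem_orbF.2 (Equiv.Perm.SameCycle.refl _ _)⟩
  have hjpos : 0 < j := Finset.card_pos.2 ⟨b, mem_orbF.2 (Equiv.Perm.SameCycle.refl _ _)⟩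
  set L := Nat.lcm i j with hL
  have hLpos : 0 < L := Nat.lcm_pos hipos hjpos
  set B := O.filter fun t => t.1 ∈ orbitFinset α a ∧ t.2.1 ∈ orbitFinset β b with hB
  set C := B.image fun t => (t.1, t.2.1) with hC
  -- card B = card C
  have hBC : B.card = C.card := by
    rw [hC, Finset.card_image_of_injOn]
    intro t₁ h₁ t₂ h₂ h
    have h₁' : t₁ ∈ O := (Finset.mem_filter.1 h₁).1
    have h₂' : t₂ ∈ O := (Finset.mem_filter.1 h₂).1
    simp only [Prod.mk.injEq] at h
    exact (hpls t₁ h₁' t₂ h₂').1 h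
  set π : Equiv.Perm (Fin n × Fin n) := Equiv.prodCongr α β with hπ
  -- C is forward invariant under π
  have hthetam : ∀ t ∈ O, (α t.1, β t.2.1, γ t.2.2) ∈ O := by
    intro t ht
    rw [← haut]
    exact Finset.mem_image_of_mem _ ht
  have hCinv : ∀ x ∈ C, π x ∈ C := by
    intro x hx
    obtain ⟨t, htB, rfl⟩ := Finset.mem_image.1 hx
    obtain ⟨htO, hta, htb⟩ := Finset.mem_filter.1 htB
    refine Finset.mem_image.2 ⟨(α t.1, β t.2.1, γ t.2.2), ?_, rfl⟩
    refine Finset.mem_filter.2 ⟨hthetam t htO, ?_, ?_⟩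
    · exact mem_orbF.2 ((mem_orbF.1 hta).trans ⟨1, by simp⟩)
    · exact mem_orbF.2 ((mem_orbF.1 htb).trans ⟨1, by simp⟩)
  -- fiberwise counting by orbits of π
  have hfib : ∀ x ∈ C, orbF π x ∈ C.image (fun y => orbF π y) :=
    fun x hx => Finset.mem_image_of_mem _ hx
  have hsum := Finset.card_eq_sum_card_fiberwise hfib
  -- each fiber has card L
  have hfibcard : ∀ s ∈ C.image (fun y => orbF π y),
      (C.filter fun x => orbF π x = s).card = L := by
    intro s hs
    obtain ⟨x₀, hx₀, rfl⟩ := Finset.mem_image.1 hs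
    have heq : (C.filter fun x => orbF π x = orbF π x₀) = orbF π x₀ := by
      apply Finset.Subset.antisymm
      · intro x hx
        obtain ⟨hxC, hxe⟩ := Finset.mem_filter.1 hx
        rw [← hxe]
        exact mem_orbF.2 (Equiv.Perm.SameCycle.refl _ _)
      · intro y hy
        refine Finset.mem_filter.2 ⟨orbF_subset_of_forward hCinv hx₀ hy, ?_⟩
        exact (orbF_eq_of_sameCycle (mem_orbF.1 hy)).symm
    rw [heq, card_orbF]
    have hcoe : ⇑π = Prod.map ⇑α ⇑β := by
      ext z <;> simp [hπ]
    rw [hcoe, Function.minimalPeriod_prodMap]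
    -- components of x₀ lie in the right orbits
    obtain ⟨t, htB, rfl⟩ := Finset.mem_image.1 hx₀
    obtain ⟨htO, hta, htb⟩ := Finset.mem_filter.1 htB
    have h1 : Function.minimalPeriod ⇑α t.1 = i := by
      rw [← card_orbF, hi, orbitFinset_eq_orbF, orbF_eq_of_sameCycle (mem_orbF.1 hta)]
    have h2 : Function.minimalPeriod ⇑β t.2.1 = j := by
      rw [← card_orbF, hj, orbitFinset_eq_orbF, orbF_eq_of_sameCycle (mem_orbF.1 htb)]
    rw [h1, h2]
  rw [Finset.sum_congr rfl hfibcard, Finset.sum_const, smul_eq_mul] at hsum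
  refine ⟨(C.image fun y => orbF π y).card, ?_, by rw [hBC, hsum]⟩
  -- bound: ω * L = card C ≤ i * j = gcd * L
  have hsub : C ⊆ (orbitFinset α a) ×ˢ (orbitFinset β b) := by
    intro x hx
    obtain ⟨t, htB, rfl⟩ := Finset.mem_image.1 hx
    obtain ⟨htO, hta, htb⟩ := Finset.mem_filter.1 htB
    exact Finset.mem_product.2 ⟨hta, htb⟩
  have hle : C.card ≤ i * j := by
    calc C.card ≤ ((orbitFinset α a) ×ˢ (orbitFinset β b)).card := Finset.card_le_card hsub
    _ = i * j := Finset.card_product _ _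
  rw [hsum] at hle
  have : (C.image fun y => orbF π y).card * L ≤ Nat.gcd i j * L := by
    calc (C.image fun y => orbF π y).card * L ≤ i * j := hle
    _ = Nat.gcd i j * L := (Nat.gcd_mul_lcm i j).symm
  exact Nat.le_of_mul_le_mul_right this hLpos
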